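/- Let u, v : ℝ^N → ℝ with v = P_a u the polarization of u across the hyperplane {x₁ = a}, and let F(s,t) = (s-t)(s⁺-t⁺). Then for all x, y in the half-space Σ_a⁺ = {x₁ ≥ a}: F(u(x),u(y))/|x-y|^{N+2s} + F(u(x̄),u(y))/|x̄-y|^{N+2s} + F(u(x),u(ȳ))/|x-ȳ|^{N+2s} + F(u(x̄),u(ȳ))/|x̄-ȳ|^{N+2s} ≥ F(v(x),v(y))/|x-y|^{N+2s} + F(v(x̄),v(y))/|x̄-y|^{N+2s} + F(v(x),v(ȳ))/|x-ȳ|^{N+2s} + F(v(x̄),v(ȳ))/|x̄-ȳ|^{N+2s}, provided x ≠ y and x ≠ ȳ (so that all denominators are positive). -/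

import Mathlib

/-- Reflection of `x` across the hyperplane `{x₁ = a}`. -/
noncomputable def reflA {N : ℕ} [NeZero N] (a : ℝ) (x : EuclideanSpace ℝ (Fin N)) :
    EuclideanSpace ℝ (Fin N) :=
  WithLp.toLp 2 (fun i => if i = 0 then 2 * a - x 0 else x i)

/-- Polarization of `u` with respect to the hyperplane `{x₁ = a}`. -/
noncomputable def pol {N : ℕ} [NeZero N] (a : ℝ) (u : EuclideanSpace ℝ (Fin N) → ℝ)
    (x : EuclideanSpace ℝ (Fin N)) : ℝ :=
  if a ≤ x 0 then min (u x) (u (reflA a x)) else max (u x) (u (reflA a x))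

/-- `F s t = (s - t)(s⁺ - t⁺)`. -/
noncomputable def Ffun (s t : ℝ) : ℝ := (s - t) * (max s 0 - max t 0)

lemma max_zero_eq' (x : ℝ) : max x 0 = (x + |x|) / 2 := by
  rcases le_total x 0 with h | h
  · rw [max_eq_right h, abs_of_nonpos h]; ring
  · rw [max_eq_left h, abs_of_nonneg h]; ring

lemma Ffun_submod (a b c d : ℝ) (hab : a ≤ b) (hcd : c ≤ d) :
    Ffun a c + Ffun b d ≤ Ffun a d + Ffun b c := by
  simp only [Ffun, max_zero_eq']
  have h1 : |a| - |b| ≤ b - a := by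
    have h := abs_sub_abs_le_abs_sub a b
    rwa [abs_sub_comm, abs_of_nonneg (sub_nonneg.2 hab)] at h
  have h2 : |c| - |d| ≤ d - c := by
    have h := abs_sub_abs_le_abs_sub c d
    rwa [abs_sub_comm, abs_of_nonneg (sub_nonneg.2 hcd)] at h
  nlinarith [mul_nonneg (sub_nonneg.2 hcd) (by linarith : (0:ℝ) ≤ (b - a) - (|a| - |b|)),
    mul_nonneg (sub_nonneg.2 hab) (by linarith : (0:ℝ) ≤ (d - c) - (|c| - |d|))]

lemma reflA_invol {N : ℕ} [NeZero N] (a : ℝ) (x : EuclideanSpace ℝ (Fin N)) :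
    reflA a (reflA a x) = x := by
  ext i
  by_cases h : i = 0
  · subst h; simp [reflA]
  · simp [reflA, h]

lemma pol_eq_min {N : ℕ} [NeZero N] (a : ℝ) (u : EuclideanSpace ℝ (Fin N) → ℝ)
    (x : EuclideanSpace ℝ (Fin N)) (hx : a ≤ x 0) :
    pol a u x = min (u x) (u (reflA a x)) := by
  simp [pol, hx]

lemma pol_refl_eq_max {N : ℕ} [NeZero N] (a : ℝ) (u : EuclideanSpace ℝ (Fin N) → ℝ)
    (x : EuclideanSpace ℝ (Fin N)) (hx : a ≤ x 0) :
    pol a u (reflA a x) = max (u x) (u (reflA a x)) := by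
  have h0 : (reflA a x) 0 = 2 * a - x 0 := by simp [reflA]
  rcases eq_or_lt_of_le hx with h | h
  · have hxx : reflA a x = x := by
      ext i
      by_cases hi : i = 0
      · subst hi; simp [reflA]; linarith
      · simp [reflA, hi]
    rw [hxx]
    simp [pol, hx, hxx]
  · unfold pol
    rw [if_neg (by rw [h0]; linarith), reflA_invol, max_comm]

theorem four_point_kernel_inequality {N : ℕ} [NeZero N] (s a : ℝ)
    (hs : s ∈ Set.Ioo (0 : ℝ) 1) (u v : EuclideanSpace ℝ (Fin N) → ℝ)
    (hv : v = pol a u) (x y : EuclideanSpace ℝ (Fin N))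
    (hx : a ≤ x 0) (hy : a ≤ y 0) (hxy : x ≠ y) (hxy' : x ≠ reflA a y) :
    Ffun (u x) (u y) / ‖x - y‖ ^ ((N : ℝ) + 2 * s)
      + Ffun (u (reflA a x)) (u y) / ‖reflA a x - y‖ ^ ((N : ℝ) + 2 * s)
      + Ffun (u x) (u (reflA a y)) / ‖x - reflA a y‖ ^ ((N : ℝ) + 2 * s)
      + Ffun (u (reflA a x)) (u (reflA a y)) / ‖reflA a x - reflA a y‖ ^ ((N : ℝ) + 2 * s)
    ≥ Ffun (v x) (v y) / ‖x - y‖ ^ ((N : ℝ) + 2 * s)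
      + Ffun (v (reflA a x)) (v y) / ‖reflA a x - y‖ ^ ((N : ℝ) + 2 * s)
      + Ffun (v x) (v (reflA a y)) / ‖x - reflA a y‖ ^ ((N : ℝ) + 2 * s)
      + Ffun (v (reflA a x)) (v (reflA a y)) / ‖reflA a x - reflA a y‖ ^ ((N : ℝ) + 2 * s) := by
  obtain ⟨hs0, hs1⟩ := hs
  subst hv
  have hNpos : (0:ℝ) ≤ N := Nat.cast_nonneg N
  have hepos : 0 < (N : ℝ) + 2 * s := by linarith
  have hd1 : (0:ℝ) < ‖x - y‖ := by
    rw [norm_pos_iff]; exact sub_ne_zero.2 hxy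
  have hd2 : (0:ℝ) < ‖x - reflA a y‖ := by
    rw [norm_pos_iff]; exact sub_ne_zero.2 hxy'
  have hdle : ‖x - y‖ ≤ ‖x - reflA a y‖ := by
    rw [EuclideanSpace.norm_eq, EuclideanSpace.norm_eq]
    apply Real.sqrt_le_sqrt
    apply Finset.sum_le_sum
    intro i _
    by_cases hi : i = 0
    · subst hi
      simp only [PiLp.sub_apply, Real.norm_eq_abs, sq_abs]
      have : reflA a y 0 = 2 * a - y 0 := by simp [reflA]
      rw [this]
      nlinarith [mul_nonneg (sub_nonneg.2 hx) (sub_nonneg.2 hy)]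
    · simp [PiLp.sub_apply, reflA, hi]
  have hnm1 : ‖reflA a x - reflA a y‖ = ‖x - y‖ := by
    rw [EuclideanSpace.norm_eq, EuclideanSpace.norm_eq]
    congr 1
    apply Finset.sum_congr rfl
    intro i _
    by_cases hi : i = 0
    · subst hi
      simp only [PiLp.sub_apply, Real.norm_eq_abs, sq_abs]
      have h1 : reflA a x 0 = 2 * a - x 0 := by simp [reflA]
      have h2 : reflA a y 0 = 2 * a - y 0 := by simp [reflA]
      rw [h1, h2]; ring
    · simp [PiLp.sub_apply, reflA, hi]
  have hnm2 : ‖reflA a x - y‖ = ‖x - reflA a y‖ := by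
    rw [EuclideanSpace.norm_eq, EuclideanSpace.norm_eq]
    congr 1
    apply Finset.sum_congr rfl
    intro i _
    by_cases hi : i = 0
    · subst hi
      simp only [PiLp.sub_apply, Real.norm_eq_abs, sq_abs]
      have h1 : reflA a x 0 = 2 * a - x 0 := by simp [reflA]
      have h2 : reflA a y 0 = 2 * a - y 0 := by simp [reflA]
      rw [h1, h2]; ring
    · simp [PiLp.sub_apply, reflA, hi]
  have hk1 : 0 < ‖x - y‖ ^ ((N : ℝ) + 2 * s) := Real.rpow_pos_of_pos hd1 _
  have hk2 : 0 < ‖x - reflA a y‖ ^ ((N : ℝ) + 2 * s) := Real.rpow_pos_of_pos hd2 _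
  have hkle : ‖x - y‖ ^ ((N : ℝ) + 2 * s) ≤ ‖x - reflA a y‖ ^ ((N : ℝ) + 2 * s) :=
    Real.rpow_le_rpow (le_of_lt hd1) hdle (le_of_lt hepos)
  rw [hnm1, hnm2, pol_eq_min a u x hx, pol_eq_min a u y hy,
    pol_refl_eq_max a u x hx, pol_refl_eq_max a u y hy]
  set k1 := ‖x - y‖ ^ ((N : ℝ) + 2 * s) with hk1def
  set k2 := ‖x - reflA a y‖ ^ ((N : ℝ) + 2 * s) with hk2def
  set A := u x
  set B := u (reflA a x)
  set C := u y
  set D := u (reflA a y)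
  have hinv : 0 ≤ 1 / k1 - 1 / k2 := by
    have := one_div_le_one_div_of_le hk1 hkle
    linarith
  rcases le_total A B with hAB | hAB <;> rcases le_total C D with hCD | hCD
  · rw [min_eq_left hAB, max_eq_right hAB, min_eq_left hCD, max_eq_right hCD]
  · rw [min_eq_left hAB, max_eq_right hAB, min_eq_right hCD, max_eq_left hCD]
    have hsub := Ffun_submod A B D C hAB hCD
    have key := mul_le_mul_of_nonneg_right hsub hinv
    have e1 : ∀ z : ℝ, z / k1 - z / k2 = z * (1 / k1 - 1 / k2) := by
      intro z; field_simp
    linarith [e1 (Ffun A C), e1 (Ffun B D), e1 (Ffun A D), e1 (Ffun B C), key]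
  · rw [min_eq_right hAB, max_eq_left hAB, min_eq_left hCD, max_eq_right hCD]
    have hsub := Ffun_submod B A C D hAB hCD
    have key := mul_le_mul_of_nonneg_right hsub hinv
    have e1 : ∀ z : ℝ, z / k1 - z / k2 = z * (1 / k1 - 1 / k2) := by
      intro z; field_simp
    linarith [e1 (Ffun A C), e1 (Ffun B D), e1 (Ffun A D), e1 (Ffun B C), key]
  · rw [min_eq_right hAB, max_eq_left hAB, min_eq_right hCD, max_eq_left hCD]
    linarith
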